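/- Under hypotheses (i), (ii), (iii), let β ∈ (0,1) be such that q^β − 1 < 1/4. If in addition U_0(ω) ≤ (1/4)^{1/β} for all ω, then P({ω : U_n(ω) → 0 as n → ∞}) ≥ 1/2. -/

import Mathlib

set_option maxHeartbeats 1000000


open MeasureTheory Filter

/-- if moreover `β ∈ (0,1)` satisfies `q^β - 1 < 1/4` and `U₀ ≤ (1/4)^{1/β}`
everywhere, then `Uₙ → 0` with probability at least `1/2`. -/
theorem small_start_converges_to_zero {Ω : Type*} {m0 : MeasurableSpace Ω}
    (P : Measure Ω) [IsProbabilityMeasure P] (ℱ : Filtration ℕ m0)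
    (U : ℕ → Ω → ℝ) (hadp : Adapted ℱ U)
    (h01 : ∀ n ω, U n ω ∈ Set.Icc (0 : ℝ) 1)
    (hsq : ∀ n, ∀ᵐ ω ∂P,
      (1 : ℝ) / 2 ≤
        MeasureTheory.condExp (ℱ n) P
          (Set.indicator {ω' | U (n + 1) ω' = (U n ω') ^ 2} (fun _ => (1 : ℝ))) ω)
    (q : ℕ) (hq : 0 < q)
    (hbd : ∀ n ω, U (n + 1) ω ≤ (q : ℝ) * U n ω)
    (β : ℝ) (hβ : β ∈ Set.Ioo (0 : ℝ) 1) (hqβ : (q : ℝ) ^ β - 1 < 1 / 4)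
    (hU0 : ∀ ω, U 0 ω ≤ (1 / 4 : ℝ) ^ (1 / β)) :
    (1 / 2 : ENNReal) ≤ P {ω | Tendsto (fun n => U n ω) atTop (nhds 0)} := by
  classical
  obtain ⟨hβ0, hβ1⟩ := hβ
  have hβne : β ≠ 0 := ne_of_gt hβ0
  have hq1 : (1 : ℝ) ≤ (q : ℝ) := by exact_mod_cast hq
  have hqb1 : (1 : ℝ) ≤ (q : ℝ) ^ β := Real.one_le_rpow hq1 hβ0.le
  have hqb : (q : ℝ) ^ β < 5 / 4 := by linarith
  set c : ℝ := ((1 : ℝ) / 2 + (q : ℝ) ^ β) / 2 with hc_def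
  have hc0 : (0 : ℝ) < c := by rw [hc_def]; linarith
  have hc1 : c < 7 / 8 := by rw [hc_def]; linarith
  have hc34 : (3:ℝ)/4 ≤ c := by rw [hc_def]; linarith
  have hclt1 : c < 1 := by linarith
  -- the transformed process
  set V : ℕ → Ω → ℝ := fun n ω => U n ω ^ β with hVdef
  have hV0 : ∀ n ω, 0 ≤ V n ω := fun n ω => Real.rpow_nonneg (h01 n ω).1 β
  have hV1 : ∀ n ω, V n ω ≤ 1 := fun n ω => Real.rpow_le_one (h01 n ω).1 (h01 n ω).2 hβ0.le
  have hVstart : ∀ ω, V 0 ω ≤ 1 / 4 := by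
    intro ω
    have h := Real.rpow_le_rpow (h01 0 ω).1 (hU0 ω) hβ0.le
    rwa [← Real.rpow_mul (by norm_num : (0:ℝ) ≤ 1/4), one_div_mul_cancel hβne,
      Real.rpow_one] at h
  have mU : ∀ n, Measurable (U n) := fun n => (hadp n).mono (ℱ.le n) le_rfl
  have mV : ∀ n, Measurable (V n) := fun n =>
    (Real.continuous_rpow_const hβ0.le).measurable.comp (mU n)
  -- good events
  set G : ℕ → Set Ω := fun n => {ω | ∀ k ≤ n, V k ω ≤ 1 / 2} with hGdef
  have mGF : ∀ n, MeasurableSet[ℱ n] (G n) := by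
    intro n
    have : G n = ⋂ k, ⋂ (_ : k ≤ n), (V k) ⁻¹' Set.Iic (1 / 2) := by
      ext ω; simp [hGdef, Set.mem_iInter]
    rw [this]
    refine MeasurableSet.iInter fun k => MeasurableSet.iInter fun hk => ?_
    have : Measurable[ℱ n] (V k) :=
      (Real.continuous_rpow_const hβ0.le).measurable.comp
        ((hadp k).mono (ℱ.mono hk) le_rfl)
    exact this measurableSet_Iic
  have mG : ∀ n, MeasurableSet (G n) := fun n => ℱ.le n _ (mGF n)
  have hGanti : ∀ n, G (n + 1) ⊆ G n := by
    intro n ω hω k hk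
    exact hω k (hk.trans (Nat.le_succ n))
  have hGzero : G 0 = Set.univ := by
    ext ω
    simp only [hGdef, Set.mem_setOf_eq, Set.mem_univ, iff_true]
    intro k hk
    interval_cases k
    exact (hVstart ω).trans (by norm_num)
  -- squaring events
  set A : ℕ → Set Ω := fun n => {ω' | U (n + 1) ω' = (U n ω') ^ 2} with hAdef
  have mA : ∀ n, MeasurableSet (A n) :=
    fun n => measurableSet_eq_fun (mU (n + 1)) ((mU n).pow_const 2)
  -- integrability helper
  have intb : ∀ (f : Ω → ℝ) (C : ℝ), Measurable f → (∀ ω, |f ω| ≤ C) → Integrable f P := by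
    intro f C hf hb
    exact (integrable_const C).mono' hf.aestronglyMeasurable
      (ae_of_all _ (fun ω => by simpa [Real.norm_eq_abs] using hb ω))
  -- indicator functions
  set gi : ℕ → Ω → ℝ := fun n => (G n).indicator (fun _ => (1:ℝ)) with hgidef
  have hgi01 : ∀ n ω, gi n ω = 0 ∨ gi n ω = 1 := by
    intro n ω
    by_cases h : ω ∈ G n <;> simp [hgidef, Set.indicator_apply, h]
  have hgi0 : ∀ n ω, 0 ≤ gi n ω := by
    intro n ω; rcases hgi01 n ω with h | h <;> rw [h] <;> norm_num
  have hgi1 : ∀ n ω, gi n ω ≤ 1 := by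
    intro n ω; rcases hgi01 n ω with h | h <;> rw [h] <;> norm_num
  have mgi : ∀ n, Measurable (gi n) := fun n => measurable_const.indicator (mG n)
  have mgiF : ∀ n, Measurable[ℱ n] (gi n) := fun n =>
    (@measurable_const ℝ Ω _ (ℱ n) 1).indicator (mGF n)
  -- key conditional-probability step
  have key : ∀ (n : ℕ) (X : Ω → ℝ), StronglyMeasurable[ℱ n] X → (∀ ω, 0 ≤ X ω) →
      (∀ ω, X ω ≤ 2) →
      (1 / 2) * ∫ ω, X ω ∂P ≤ ∫ ω, (A n).indicator (fun _ => (1:ℝ)) ω * X ω ∂P := by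
    intro n X hXm hX0 hX2
    set f : Ω → ℝ := (A n).indicator (fun _ => (1:ℝ)) with hfdef
    have hf01 : ∀ ω, f ω = 0 ∨ f ω = 1 := by
      intro ω; by_cases h : ω ∈ A n <;> simp [hfdef, Set.indicator_apply, h]
    have hfm : Measurable f := measurable_const.indicator (mA n)
    have hfi : Integrable f P :=
      intb f 1 hfm (fun ω => by rcases hf01 ω with h | h <;> rw [h] <;> norm_num)
    have hXm0 : Measurable X := (hXm.mono (ℱ.le n)).measurable
    have hXi : Integrable X P :=
      intb X 2 hXm0 (fun ω => abs_le.2 ⟨by linarith [hX0 ω], hX2 ω⟩)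
    have hXfi : Integrable (X * f) P := by
      refine intb _ 2 (hXm0.mul hfm) (fun ω => ?_)
      rcases hf01 ω with h | h <;> rw [Pi.mul_apply, h]
      · simp
      · rw [mul_one]; exact abs_le.2 ⟨by linarith [hX0 ω], hX2 ω⟩
    have hmul : P[X * f | ℱ n] =ᵐ[P] X * P[f | ℱ n] :=
      condExp_stronglyMeasurable_mul_of_bound (ℱ.le n) hXm hfi 2
        (ae_of_all _ fun ω => by
          rw [Real.norm_eq_abs]; exact abs_le.2 ⟨by linarith [hX0 ω], hX2 ω⟩)
    have h1 : ∫ ω, X ω * f ω ∂P = ∫ ω, (X * P[f | ℱ n]) ω ∂P := by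
      rw [← integral_congr_ae hmul]
      exact (integral_condExp (ℱ.le n)).symm
    have h2 : (1 / 2) * ∫ ω, X ω ∂P ≤ ∫ ω, (X * P[f | ℱ n]) ω ∂P := by
      have hint2 : Integrable (X * P[f | ℱ n]) P := integrable_condExp.congr hmul
      have : ∫ ω, X ω * (1 / 2) ∂P ≤ ∫ ω, (X * P[f | ℱ n]) ω ∂P := by
        refine integral_mono_ae (hXi.mul_const _) hint2 ?_
        filter_upwards [hsq n] with ω hω
        exact mul_le_mul_of_nonneg_left hω (hX0 ω)
      rw [integral_mul_const] at this
      linarith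
    calc (1 / 2) * ∫ ω, X ω ∂P ≤ ∫ ω, (X * P[f | ℱ n]) ω ∂P := h2
      _ = ∫ ω, X ω * f ω ∂P := h1.symm
      _ = ∫ ω, f ω * X ω ∂P := by simp_rw [mul_comm]
  -- the quantities x n = E[V n · 1_{G n}]
  set x : ℕ → ℝ := fun n => ∫ ω, V n ω * gi n ω ∂P with hxdef
  have intVg : ∀ n m, Integrable (fun ω => V n ω * gi m ω) P := by
    intro n m
    refine intb _ 1 ((mV n).mul (mgi m)) (fun ω => ?_)
    rw [abs_of_nonneg (mul_nonneg (hV0 n ω) (hgi0 m ω))]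
    exact mul_le_one₀ (hV1 n ω) (hgi0 m ω) (hgi1 m ω)
  have hx0 : ∀ n, 0 ≤ x n := fun n =>
    integral_nonneg (fun ω => mul_nonneg (hV0 n ω) (hgi0 n ω))
  have hxquarter : x 0 ≤ 1 / 4 := by
    have : ∫ ω, V 0 ω * gi 0 ω ∂P ≤ ∫ _ω, (1/4 : ℝ) ∂P := by
      refine integral_mono (intVg 0 0) (integrable_const _) (fun ω => ?_)
      calc V 0 ω * gi 0 ω ≤ V 0 ω * 1 :=
            mul_le_mul_of_nonneg_left (hgi1 0 ω) (hV0 0 ω)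
        _ ≤ 1/4 := by rw [mul_one]; exact hVstart ω
    simpa [hxdef] using this
  -- drift inequality
  have L1 : ∀ n, ∫ ω, V (n + 1) ω * gi n ω ∂P ≤ c * x n := by
    intro n
    set fA : Ω → ℝ := (A n).indicator (fun _ => (1:ℝ)) with hfAdef
    have hfA01 : ∀ ω, fA ω = 0 ∨ fA ω = 1 := by
      intro ω; by_cases h : ω ∈ A n <;> simp [hfAdef, Set.indicator_apply, h]
    have hfAm : Measurable fA := measurable_const.indicator (mA n)
    set X : Ω → ℝ := fun ω => ((q:ℝ) ^ β * V n ω - (V n ω) ^ 2) * gi n ω with hXdef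
    have hXmF : StronglyMeasurable[ℱ n] X := by
      have hVF : Measurable[ℱ n] (V n) :=
        (Real.continuous_rpow_const hβ0.le).measurable.comp (hadp n)
      exact (((measurable_const.mul hVF).sub (hVF.pow_const 2)).mul (mgiF n)).stronglyMeasurable
    have hXm : Measurable X :=
      ((measurable_const.mul (mV n)).sub ((mV n).pow_const 2)).mul (mgi n)
    have hX0 : ∀ ω, 0 ≤ X ω := by
      intro ω
      have h1 := hV0 n ω; have h2 := hV1 n ω; have h3 := hgi0 n ω
      have : (V n ω) ^ 2 ≤ (q:ℝ) ^ β * V n ω := by nlinarith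
      exact mul_nonneg (by linarith) h3
    have hX2 : ∀ ω, X ω ≤ 2 := by
      intro ω
      show ((q:ℝ) ^ β * V n ω - (V n ω) ^ 2) * gi n ω ≤ 2
      have h1 := hV0 n ω; have h2 := hV1 n ω; have h3 := hgi0 n ω; have h4 := hgi1 n ω
      have h6 : 0 ≤ (q:ℝ) ^ β * V n ω - (V n ω) ^ 2 := by nlinarith
      have h5 : (q:ℝ) ^ β * V n ω - (V n ω) ^ 2 ≤ 2 := by nlinarith [sq_nonneg (V n ω)]
      calc ((q:ℝ) ^ β * V n ω - (V n ω) ^ 2) * gi n ω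
          ≤ ((q:ℝ) ^ β * V n ω - (V n ω) ^ 2) * 1 := mul_le_mul_of_nonneg_left h4 h6
        _ ≤ 2 := by linarith
    have hkey := key n X hXmF hX0 hX2
    -- pointwise inequality
    have hpt : ∀ ω, V (n + 1) ω * gi n ω ≤ (q:ℝ) ^ β * (V n ω * gi n ω) - fA ω * X ω := by
      intro ω
      by_cases hω : ω ∈ A n
      · have hfa : fA ω = 1 := by simp [hfAdef, Set.indicator_apply, hω]
        have hVeq : V (n + 1) ω = (V n ω) ^ 2 := by
          have hU : U (n + 1) ω = (U n ω) ^ 2 := hω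
          simp only [hVdef]
          rw [hU, ← Real.rpow_natCast (U n ω) 2, ← Real.rpow_mul (h01 n ω).1, mul_comm,
            Real.rpow_mul (h01 n ω).1, Real.rpow_natCast]
        have hXv : X ω = ((q:ℝ) ^ β * V n ω - (V n ω) ^ 2) * gi n ω := rfl
        rw [hfa, hVeq, one_mul, hXv]
        have heq : (q:ℝ) ^ β * (V n ω * gi n ω)
            - ((q:ℝ) ^ β * V n ω - V n ω ^ 2) * gi n ω = V n ω ^ 2 * gi n ω := by ring
        rw [heq]
      · have hfa : fA ω = 0 := by simp [hfAdef, Set.indicator_apply, hω]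
        have hle : V (n + 1) ω ≤ (q:ℝ) ^ β * V n ω := by
          have h := Real.rpow_le_rpow (h01 (n + 1) ω).1 (hbd n ω) hβ0.le
          rwa [Real.mul_rpow (by positivity) (h01 n ω).1] at h
        rw [hfa, zero_mul, sub_zero, ← mul_assoc]
        exact mul_le_mul_of_nonneg_right hle (hgi0 n ω)
    have intX : Integrable X P :=
      intb X 2 hXm (fun ω => abs_le.2 ⟨by linarith [hX0 ω], hX2 ω⟩)
    have intfAX : Integrable (fun ω => fA ω * X ω) P := by
      refine intb _ 2 (hfAm.mul hXm) (fun ω => ?_)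
      rcases hfA01 ω with h | h <;> rw [h]
      · simp
      · rw [one_mul]; exact abs_le.2 ⟨by linarith [hX0 ω], hX2 ω⟩
    have intVsqg : Integrable (fun ω => (V n ω) ^ 2 * gi n ω) P := by
      refine intb _ 1 (((mV n).pow_const 2).mul (mgi n)) (fun ω => ?_)
      have h1 := hV0 n ω; have h2 := hV1 n ω; have h3 := hgi0 n ω; have h4 := hgi1 n ω
      rw [abs_of_nonneg (mul_nonneg (sq_nonneg _) h3)]
      nlinarith
    -- integrate the pointwise inequality
    have hint1 : ∫ ω, V (n + 1) ω * gi n ω ∂P ≤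
        (q:ℝ) ^ β * x n - ∫ ω, fA ω * X ω ∂P := by
      calc ∫ ω, V (n + 1) ω * gi n ω ∂P
          ≤ ∫ ω, ((q:ℝ) ^ β * (V n ω * gi n ω) - fA ω * X ω) ∂P :=
            integral_mono (intVg (n + 1) n)
              (((intVg n n).const_mul ((q:ℝ) ^ β)).sub intfAX) hpt
        _ = (q:ℝ) ^ β * x n - ∫ ω, fA ω * X ω ∂P := by
            rw [integral_sub ((intVg n n).const_mul ((q:ℝ) ^ β)) intfAX,
              integral_const_mul]
    -- compute ∫ X
    have hXsplit : ∫ ω, X ω ∂P = (q:ℝ) ^ β * x n - ∫ ω, (V n ω) ^ 2 * gi n ω ∂P := by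
      have : ∀ ω, X ω = (q:ℝ) ^ β * (V n ω * gi n ω) - (V n ω) ^ 2 * gi n ω := by
        intro ω; rw [hXdef]; ring
      rw [integral_congr_ae (ae_of_all _ this),
        integral_sub ((intVg n n).const_mul ((q:ℝ) ^ β)) intVsqg, integral_const_mul]
    -- ∫ V² g ≤ (1/2) x n
    have hsq2 : ∫ ω, (V n ω) ^ 2 * gi n ω ∂P ≤ (1 / 2) * x n := by
      have h : ∀ ω, (V n ω) ^ 2 * gi n ω ≤ (1 / 2) * (V n ω * gi n ω) := by
        intro ω
        by_cases hω : ω ∈ G n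
        · have hgi : gi n ω = 1 := by simp [hgidef, Set.indicator_apply, hω]
          have hVhalf : V n ω ≤ 1 / 2 := by
            simp only [hGdef, Set.mem_setOf_eq] at hω
            exact hω n le_rfl
          have h1 := hV0 n ω
          rw [hgi, mul_one, mul_one]; nlinarith
        · have hgi : gi n ω = 0 := by simp [hgidef, Set.indicator_apply, hω]
          rw [hgi, mul_zero, mul_zero, mul_zero]
        
      calc ∫ ω, (V n ω) ^ 2 * gi n ω ∂P
          ≤ ∫ ω, (1 / 2 : ℝ) * (V n ω * gi n ω) ∂P :=
            integral_mono intVsqg ((intVg n n).const_mul (1/2 : ℝ)) h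
        _ = (1 / 2) * x n := integral_const_mul _ _
    have hsq0 : 0 ≤ ∫ ω, (V n ω) ^ 2 * gi n ω ∂P :=
      integral_nonneg (fun ω => mul_nonneg (sq_nonneg _) (hgi0 n ω))
    have hxn := hx0 n
    rw [hc_def]
    linarith
  -- monotonicity of x along the drift
  have L2 : ∀ n, x (n + 1) ≤ c * x n := by
    intro n
    have hpt : ∀ ω, V (n + 1) ω * gi (n + 1) ω ≤ V (n + 1) ω * gi n ω := by
      intro ω
      refine mul_le_mul_of_nonneg_left ?_ (hV0 (n + 1) ω)
      by_cases hω : ω ∈ G (n + 1)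
      · have h1 : gi (n + 1) ω = 1 := by simp [hgidef, Set.indicator_apply, hω]
        have h2 : gi n ω = 1 := by simp [hgidef, Set.indicator_apply, hGanti n hω]
        rw [h1, h2]
      · have h1 : gi (n + 1) ω = 0 := by simp [hgidef, Set.indicator_apply, hω]
        rw [h1]; exact hgi0 n ω
    calc x (n + 1) = ∫ ω, V (n + 1) ω * gi (n + 1) ω ∂P := rfl
      _ ≤ ∫ ω, V (n + 1) ω * gi n ω ∂P :=
          integral_mono (intVg (n + 1) (n + 1)) (intVg (n + 1) n) hpt
      _ ≤ c * x n := L1 n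
  have hxgeo : ∀ n, x n ≤ (1 / 4) * c ^ n := by
    intro n
    induction n with
    | zero => simpa using hxquarter
    | succ n ih =>
      calc x (n + 1) ≤ c * x n := L2 n
        _ ≤ c * ((1 / 4) * c ^ n) := mul_le_mul_of_nonneg_left ih hc0.le
        _ = (1 / 4) * c ^ (n + 1) := by ring
  -- the escape probabilities
  set t : ℕ → ℝ := fun n => (P (G n)ᶜ).toReal with htdef
  have ht0 : t 0 = 0 := by
    simp [htdef, hGzero]
  have hstep : ∀ n, t (n + 1) + 2 * x (n + 1) ≤ t n + 2 * (c * x n) := by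
    intro n
    set B : Set Ω := G n \ G (n + 1) with hBdef
    have mB : MeasurableSet B := (mG n).diff (mG (n + 1))
    have hsplit : (G (n + 1))ᶜ = (G n)ᶜ ∪ B := by
      ext ω
      simp only [Set.mem_compl_iff, Set.mem_union, hBdef, Set.mem_diff]
      constructor
      · intro h
        by_cases hn : ω ∈ G n
        · exact Or.inr ⟨hn, h⟩
        · exact Or.inl hn
      · rintro (h | ⟨_, h⟩)
        · exact fun hh => h (hGanti n hh)
        · exact h
    have hdisj : Disjoint ((G n)ᶜ) B := by
      refine Set.disjoint_left.2 fun ω hω hωB => hω hωB.1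
    have hPsum : t (n + 1) = t n + (P B).toReal := by
      rw [htdef]
      simp only
      rw [hsplit, measure_union hdisj mB,
        ENNReal.toReal_add (measure_ne_top P _) (measure_ne_top P _)]
    -- bound P(B)
    have hptB : ∀ ω, B.indicator (fun _ => (1:ℝ)) ω ≤
        2 * (V (n + 1) ω * gi n ω - V (n + 1) ω * gi (n + 1) ω) := by
      intro ω
      by_cases hω : ω ∈ B
      · have h1 : gi n ω = 1 := by simp [hgidef, Set.indicator_apply, hω.1]
        have h2 : gi (n + 1) ω = 0 := by simp [hgidef, Set.indicator_apply, hω.2]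
        have hVbig : 1 / 2 < V (n + 1) ω := by
          have h3 := hω.2
          simp only [hGdef, Set.mem_setOf_eq, not_forall] at h3
          obtain ⟨k, hk, hVk⟩ := h3
          push_neg at hVk
          rcases Nat.lt_or_ge k (n + 1) with hlt | hge
          · exact absurd (hω.1 k (Nat.lt_succ_iff.mp hlt)) (not_le.mpr hVk)
          · have : k = n + 1 := le_antisymm hk hge
            rwa [this] at hVk
        rw [Set.indicator_of_mem hω, h1, h2, mul_one, mul_zero, sub_zero]
        linarith
      · rw [Set.indicator_of_notMem hω]
        by_cases hg : ω ∈ G (n + 1)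
        · have h1 : gi n ω = 1 := by simp [hgidef, Set.indicator_apply, hGanti n hg]
          have h2 : gi (n + 1) ω = 1 := by simp [hgidef, Set.indicator_apply, hg]
          rw [h1, h2]; simp
        · have h2 : gi (n + 1) ω = 0 := by simp [hgidef, Set.indicator_apply, hg]
          by_cases hgn : ω ∈ G n
          · exact absurd ⟨hgn, hg⟩ hω
          · have h1 : gi n ω = 0 := by simp [hgidef, Set.indicator_apply, hgn]
            rw [h1, h2]; simp
    have hPB : (P B).toReal ≤ 2 * (c * x n - x (n + 1)) := by
      have hind : Integrable (B.indicator (fun _ => (1:ℝ))) P := by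
        refine intb _ 1 (measurable_const.indicator mB) (fun ω => ?_)
        by_cases h : ω ∈ B <;> simp [Set.indicator_apply, h]
      have h1 : (P B).toReal = ∫ ω, B.indicator (fun _ => (1:ℝ)) ω ∂P := by
        rw [integral_indicator_const (1:ℝ) mB, smul_eq_mul, mul_one]; rfl
      have h2 : ∫ ω, B.indicator (fun _ => (1:ℝ)) ω ∂P ≤
          ∫ ω, 2 * (V (n + 1) ω * gi n ω - V (n + 1) ω * gi (n + 1) ω) ∂P :=
        integral_mono hind
          (((intVg (n + 1) n).sub (intVg (n + 1) (n + 1))).const_mul 2) hptB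
      have h3 : ∫ ω, 2 * (V (n + 1) ω * gi n ω - V (n + 1) ω * gi (n + 1) ω) ∂P
          = 2 * ((∫ ω, V (n + 1) ω * gi n ω ∂P) - x (n + 1)) := by
        rw [integral_const_mul, integral_sub (intVg (n + 1) n) (intVg (n + 1) (n + 1))]
      have h4 := L1 n
      have : ∫ ω, V (n + 1) ω * gi n ω ∂P ≤ c * x n := h4
      rw [h1]
      calc ∫ ω, B.indicator (fun _ => (1:ℝ)) ω ∂P
          ≤ 2 * ((∫ ω, V (n + 1) ω * gi n ω ∂P) - x (n + 1)) := by rw [← h3]; exact h2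
        _ ≤ 2 * (c * x n - x (n + 1)) := by linarith
    rw [hPsum]; linarith
  have hinv : ∀ n, t (n + 1) + 2 * x (n + 1) ≤ 2 * (c * x 0) := by
    intro n
    induction n with
    | zero => have := hstep 0; rw [ht0] at this; linarith
    | succ n ih =>
      have h1 := hstep (n + 1)
      have h2 : c * x (n + 1) ≤ x (n + 1) := by
        nlinarith [hx0 (n + 1)]
      linarith
  have ht716 : ∀ n, t n ≤ 7 / 16 := by
    intro n
    cases n with
    | zero => rw [ht0]; norm_num
    | succ n =>
      have h1 := hinv n
      have h2 := hx0 (n + 1)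
      have h3 : c * x 0 ≤ (7 / 8) * (1 / 4) := by
        nlinarith [hx0 0]
      linarith
  -- pass to ENNReal
  have hGcE : ∀ n, P (G n)ᶜ ≤ ENNReal.ofReal (7 / 16) := by
    intro n
    rw [ENNReal.le_ofReal_iff_toReal_le (measure_ne_top P _) (by norm_num)]
    exact ht716 n
  have hUnionGc : P (⋃ n, (G n)ᶜ) ≤ ENNReal.ofReal (7 / 16) := by
    have hmono : Monotone (fun n => (G n)ᶜ) := by
      intro a b hab
      exact Set.compl_subset_compl.2 (fun ω hω k hk => hω k (hk.trans hab))
    rw [hmono.directed_le.measure_iUnion]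
    exact iSup_le hGcE
  -- Borel-Cantelli sets
  set s : ℕ → ℕ → Set Ω := fun m n => G n ∩ {ω | 1 / ((m:ℝ) + 1) < V n ω} with hsdef
  have ms : ∀ m n, MeasurableSet (s m n) := by
    intro m n
    exact (mG n).inter ((mV n) measurableSet_Ioi)
  have hsP : ∀ m n, P (s m n) ≤ ENNReal.ofReal (((m:ℝ) + 1) * ((1 / 4) * c ^ n)) := by
    intro m n
    rw [ENNReal.le_ofReal_iff_toReal_le (measure_ne_top P _)
      (mul_nonneg (by positivity) (mul_nonneg (by norm_num) (pow_nonneg hc0.le n)))]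
    have h1 : (P (s m n)).toReal = ∫ ω, (s m n).indicator (fun _ => (1:ℝ)) ω ∂P := by
      rw [integral_indicator_const (1:ℝ) (ms m n), smul_eq_mul, mul_one]; rfl
    have hpt : ∀ ω, (s m n).indicator (fun _ => (1:ℝ)) ω ≤
        ((m:ℝ) + 1) * (V n ω * gi n ω) := by
      intro ω
      by_cases hω : ω ∈ s m n
      · have h2 : gi n ω = 1 := by simp [hgidef, Set.indicator_apply, hω.1]
        have h3 : 1 / ((m:ℝ) + 1) < V n ω := hω.2
        have hm0 : (0:ℝ) < (m:ℝ) + 1 := by positivity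
        rw [Set.indicator_of_mem hω, h2, mul_one]
        rw [div_lt_iff₀ hm0] at h3
        linarith [mul_comm ((m:ℝ) + 1) (V n ω)]
      · rw [Set.indicator_of_notMem hω]
        exact mul_nonneg (by positivity) (mul_nonneg (hV0 n ω) (hgi0 n ω))
    have hint : Integrable (fun ω => ((m:ℝ) + 1) * (V n ω * gi n ω)) P :=
      (intVg n n).const_mul _
    have hind : Integrable ((s m n).indicator (fun _ => (1:ℝ))) P := by
      refine intb _ 1 (measurable_const.indicator (ms m n)) (fun ω => ?_)
      by_cases h : ω ∈ s m n <;> simp [Set.indicator_apply, h]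
    calc (P (s m n)).toReal = ∫ ω, (s m n).indicator (fun _ => (1:ℝ)) ω ∂P := h1
      _ ≤ ∫ ω, ((m:ℝ) + 1) * (V n ω * gi n ω) ∂P := integral_mono hind hint hpt
      _ = ((m:ℝ) + 1) * x n := by rw [integral_const_mul]
      _ ≤ ((m:ℝ) + 1) * ((1 / 4) * c ^ n) :=
          mul_le_mul_of_nonneg_left (hxgeo n) (by positivity)
  set C : ℕ → Set Ω := fun m => Filter.limsup (fun n => s m n) atTop with hCdef
  have hCnull : ∀ m, P (C m) = 0 := by
    intro m
    refine measure_limsup_atTop_eq_zero ?_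
    have hsum : Summable (fun n => ((m:ℝ) + 1) * ((1 / 4) * c ^ n)) :=
      ((summable_geometric_of_lt_one hc0.le hclt1).mul_left _).mul_left _
    have hle : ∑' n, P (s m n) ≤ ENNReal.ofReal (∑' n, ((m:ℝ) + 1) * ((1 / 4) * c ^ n)) := by
      calc ∑' n, P (s m n) ≤ ∑' n, ENNReal.ofReal (((m:ℝ) + 1) * ((1 / 4) * c ^ n)) :=
            ENNReal.tsum_le_tsum (hsP m)
        _ = ENNReal.ofReal (∑' n, ((m:ℝ) + 1) * ((1 / 4) * c ^ n)) :=
            (ENNReal.ofReal_tsum_of_nonneg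
              (fun n => mul_nonneg (by positivity)
                (mul_nonneg (by norm_num) (pow_nonneg hc0.le n))) hsum).symm
    exact ne_top_of_le_ne_top ENNReal.ofReal_ne_top hle
  have hCun : P (⋃ m, C m) = 0 := measure_iUnion_null hCnull
  -- the good set
  have hTsub : (⋂ n, G n) \ (⋃ m, C m) ⊆
      {ω | Tendsto (fun n => U n ω) atTop (nhds 0)} := by
    rintro ω ⟨hωG, hωC⟩
    simp only [Set.mem_iInter] at hωG
    simp only [Set.mem_iUnion, not_exists] at hωC
    have hVtend : Tendsto (fun n => V n ω) atTop (nhds 0) := by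
      rw [Metric.tendsto_atTop]
      intro ε hε
      obtain ⟨m, hm⟩ := exists_nat_one_div_lt hε
      have hnot : ¬ ω ∈ C m := hωC m
      rw [hCdef] at hnot
      simp only at hnot
      rw [Filter.mem_limsup_iff_frequently_mem, Filter.not_frequently] at hnot
      rw [Filter.eventually_atTop] at hnot
      obtain ⟨N, hN⟩ := hnot
      refine ⟨N, fun n hn => ?_⟩
      have h1 : ¬ ω ∈ s m n := hN n hn
      have h2 : V n ω ≤ 1 / ((m:ℝ) + 1) := by
        by_contra h3
        exact h1 ⟨hωG n, not_le.mp h3⟩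
      rw [Real.dist_eq, sub_zero, abs_of_nonneg (hV0 n ω)]
      calc V n ω ≤ 1 / ((m:ℝ) + 1) := h2
        _ < ε := hm
    have hUeq : ∀ n, U n ω = (V n ω) ^ (β⁻¹) := by
      intro n
      rw [hVdef]
      simp only
      rw [← Real.rpow_mul (h01 n ω).1, mul_inv_cancel₀ hβne, Real.rpow_one]
    have hcont : ContinuousAt (fun y : ℝ => y ^ (β⁻¹)) 0 :=
      Real.continuousAt_rpow_const 0 β⁻¹ (Or.inr (by positivity))
    have := hcont.tendsto.comp hVtend
    rw [Real.zero_rpow (inv_ne_zero hβne)] at this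
    simp only [Set.mem_setOf_eq]
    have heq : (fun n => U n ω) = (fun y : ℝ => y ^ (β⁻¹)) ∘ (fun n => V n ω) := by
      funext n
      exact hUeq n
    rw [heq]
    exact this
  -- conclude
  have hmeasT : P ((⋂ n, G n) \ (⋃ m, C m)) = P (⋂ n, G n) := measure_diff_null hCun
  have hGib : (1 / 2 : ENNReal) ≤ P (⋂ n, G n) := by
    have hcompl : (⋃ n, (G n)ᶜ)ᶜ = ⋂ n, G n := by
      rw [Set.compl_iUnion]
      simp
    have hmeasU : MeasurableSet (⋃ n, (G n)ᶜ) :=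
      MeasurableSet.iUnion (fun n => (mG n).compl)
    rw [← hcompl, prob_compl_eq_one_sub hmeasU]
    have h716 : ENNReal.ofReal (7 / 16) ≤ 1 / 2 := by
      rw [show (1 / 2 : ENNReal) = ENNReal.ofReal (1 / 2) by
        rw [ENNReal.ofReal_div_of_pos (by norm_num), ENNReal.ofReal_one,
          ENNReal.ofReal_ofNat]]
      exact ENNReal.ofReal_le_ofReal (by norm_num)
    refine ENNReal.le_sub_of_add_le_left (measure_ne_top P _) ?_
    calc P (⋃ n, (G n)ᶜ) + 1 / 2 ≤ 1 / 2 + 1 / 2 :=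
          add_le_add (hUnionGc.trans h716) le_rfl
      _ = 1 := ENNReal.add_halves 1
  calc (1 / 2 : ENNReal) ≤ P (⋂ n, G n) := hGib
    _ = P ((⋂ n, G n) \ (⋃ m, C m)) := hmeasT.symm
    _ ≤ P {ω | Tendsto (fun n => U n ω) atTop (nhds 0)} := measure_mono hTsub
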